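/- Let k ≥ 0 and n ≥ 1 be integers, let p be a prime, let α be an integer with α ≡ 1 (mod p), and let ℓ = ν_p(n). Then the integer Σ_{i=k}^{n-1} i^(k̲) · α^(i-k) is congruent modulo p^ℓ to the rational number ((n-1)^(k̲)/(k+1)) · n (which has nonnegative p-adic valuation, so the congruence makes sense in the ring of p-local rationals). -/

import Mathlib

theorem myClaim1 (p t : ℕ) (hp : Fact p.Prime) (ht : 1 ≤ t) :
    padicValNat p (Nat.factorial t) + 1 ≤ t := by
  have h := sub_one_mul_padicValNat_factorial (p := p) t
  have hds : 1 ≤ (p.digits t).sum := by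
    have hne : p.digits t ≠ [] := Nat.digits_ne_nil_iff_ne_zero.mpr (by omega)
    have h1 := Nat.getLast_digit_ne_zero p (m := t) (by omega)
    have := List.single_le_sum (l := p.digits t) (fun x _ => Nat.zero_le x)
      _ (List.getLast_mem hne)
    omega
  have hp2 : 2 ≤ p := hp.out.two_le
  have hle := Nat.digit_sum_le p t
  have h2 : (p - 1) * padicValNat p (Nat.factorial t) ≤ t - 1 := by omega
  have h3 : padicValNat p (Nat.factorial t) ≤ (p - 1) * padicValNat p (Nat.factorial t) :=
    Nat.le_mul_of_pos_left _ (by omega)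
  omega

theorem myDvd (p : ℕ) (hp : Fact p.Prime) (n k t ℓ : ℕ) (hn : 0 < n)
    (hℓ : ℓ = padicValNat p n) (A : ℤ) (hA : (p : ℤ) ∣ A) (ht : 1 ≤ t) :
    (p : ℤ) ^ ℓ ∣ ((k + t).descFactorial k : ℤ) * (n.choose (k + t + 1) : ℤ) * A ^ t := by
  set j := k + t + 1 with hj
  set m := padicValNat p j with hm
  set a := padicValNat p ((k + t).descFactorial k) with ha
  have hdnz : (k + t).descFactorial k ≠ 0 := by
    simp [Nat.descFactorial_eq_zero_iff_lt]
  -- a + padicValNat p t! = padicValNat p (k+t)!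
  have hfac : Nat.factorial t * (k + t).descFactorial k = Nat.factorial (k + t) := by
    have := Nat.factorial_mul_descFactorial (n := k + t) (k := k) (Nat.le_add_right _ _)
    simpa using this
  have hval : padicValNat p (Nat.factorial t) + a = padicValNat p (Nat.factorial (k + t)) := by
    rw [← hfac, padicValNat.mul (Nat.factorial_ne_zero t) hdnz]
  -- claim2 : m ≤ padicValNat p ((k+t)!) + 1
  have hclaim2 : m ≤ padicValNat p (Nat.factorial (k + t)) + 1 := by
    rcases Nat.eq_zero_or_pos m with h0 | h0
    · omega
    · have hdvd : p ^ m ∣ j := hm ▸ pow_padicValNat_dvd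
      have hle : p ^ m ≤ j := Nat.le_of_dvd (by omega) hdvd
      have hlt : p ^ (m - 1) < p ^ m := Nat.pow_lt_pow_right hp.out.one_lt (by omega)
      have h2 : p ^ (m - 1) ∣ Nat.factorial (k + t) :=
        Nat.dvd_factorial (Nat.pow_pos hp.out.pos) (by omega)
      have := (padicValNat_dvd_iff_le (p := p) (Nat.factorial_ne_zero (k + t))).mp h2
      omega
  have hclaim1 := myClaim1 p t hp ht
  have hmat : m ≤ a + t := by omega
  -- p^m ∣ d * A^t in ℤ
  have hdm : (p : ℤ) ^ m ∣ ((k + t).descFactorial k : ℤ) * A ^ t := by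
    have h1 : (p : ℤ) ^ a ∣ ((k + t).descFactorial k : ℤ) := by
      exact_mod_cast Int.natCast_dvd_natCast.mpr (ha ▸ pow_padicValNat_dvd)
    have h2 : (p : ℤ) ^ t ∣ A ^ t := pow_dvd_pow_of_dvd hA t
    exact dvd_trans (pow_dvd_pow _ hmat) (by rw [pow_add]; exact mul_dvd_mul h1 h2)
  -- p^ℓ ∣ C * j in ℕ
  have hid : n.choose j * j = n * Nat.choose (n - 1) (k + t) := by
    have h := Nat.add_one_mul_choose_eq (n - 1) (k + t)
    rw [Nat.sub_add_cancel hn, ← hj] at h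
    omega
  have hnC : p ^ ℓ ∣ n.choose j * j := by
    rw [hid]
    exact Dvd.dvd.mul_right (hℓ ▸ pow_padicValNat_dvd) _
  rcases le_or_gt ℓ m with hc | hc
  · have : (p : ℤ) ^ ℓ ∣ ((k + t).descFactorial k : ℤ) * A ^ t :=
      dvd_trans (pow_dvd_pow _ hc) hdm
    have := this.mul_right ((n.choose j : ℤ))
    have hre : ((k + t).descFactorial k : ℤ) * (n.choose j : ℤ) * A ^ t
        = ((k + t).descFactorial k : ℤ) * A ^ t * (n.choose j : ℤ) := by ring
    rw [hre]; exact this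
  · -- m < ℓ
    set u := ordCompl[p] j with hu
    have hju : p ^ m * u = j := by
      rw [hu, hm, ← Nat.factorization_def j hp.out]
      exact Nat.ordProj_mul_ordCompl_eq_self j p
    have hpu : ¬ p ∣ u := Nat.not_dvd_ordCompl hp.out (by omega)
    have hsplit : p ^ m * p ^ (ℓ - m) ∣ p ^ m * (n.choose j * u) := by
      rw [← pow_add, show m + (ℓ - m) = ℓ by omega]
      calc p ^ ℓ ∣ n.choose j * j := hnC
        _ = p ^ m * (n.choose j * u) := by rw [← hju]; ring
  
    have hcu : p ^ (ℓ - m) ∣ n.choose j * u :=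
      (Nat.mul_dvd_mul_iff_left (Nat.pow_pos hp.out.pos)).mp hsplit
    have hcop : Nat.Coprime (p ^ (ℓ - m)) u :=
      Nat.Coprime.pow_left _ ((Nat.Prime.coprime_iff_not_dvd hp.out).mpr hpu)
    have hC : p ^ (ℓ - m) ∣ n.choose j := hcop.dvd_of_dvd_mul_right hcu
    have hCZ : (p : ℤ) ^ (ℓ - m) ∣ (n.choose j : ℤ) := by exact_mod_cast Int.natCast_dvd_natCast.mpr hC
    have hfin : (p : ℤ) ^ ℓ ∣ ((k + t).descFactorial k : ℤ) * A ^ t * (n.choose j : ℤ) := by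
      rw [show ℓ = m + (ℓ - m) by omega, pow_add]
      exact mul_dvd_mul hdm hCZ
    have hre : ((k + t).descFactorial k : ℤ) * (n.choose j : ℤ) * A ^ t
        = ((k + t).descFactorial k : ℤ) * A ^ t * (n.choose j : ℤ) := by ring
    rw [hre]; exact hfin


theorem myL2 (k s t : ℕ) (h : t ≤ s) :
    (k + s).descFactorial k * s.choose t = (k + t).descFactorial k * (k + s).choose (k + t) := by
  apply Nat.eq_of_mul_eq_mul_right
    (Nat.mul_pos (Nat.factorial_pos t) (Nat.factorial_pos (s - t)))
  have e1 : Nat.factorial s * (k + s).descFactorial k = Nat.factorial (k + s) := by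
    have := Nat.factorial_mul_descFactorial (n := k + s) (k := k) (Nat.le_add_right _ _)
    simpa using this
  have e2 : Nat.factorial t * (k + t).descFactorial k = Nat.factorial (k + t) := by
    have := Nat.factorial_mul_descFactorial (n := k + t) (k := k) (Nat.le_add_right _ _)
    simpa using this
  have e3 := Nat.choose_mul_factorial_mul_factorial h
  have e4 := Nat.choose_mul_factorial_mul_factorial (show k + t ≤ k + s by omega)
  have e5 : k + s - (k + t) = s - t := by omega
  rw [e5] at e4
  calc (k + s).descFactorial k * s.choose t * (Nat.factorial t * Nat.factorial (s - t))
      = (s.choose t * Nat.factorial t * Nat.factorial (s - t)) * (k + s).descFactorial k := by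
        ring
    _ = Nat.factorial s * (k + s).descFactorial k := by rw [e3]
    _ = Nat.factorial (k + s) := e1
    _ = (k + s).choose (k + t) * Nat.factorial (k + t) * Nat.factorial (s - t) := e4.symm
    _ = (k + s).choose (k + t) * (Nat.factorial t * (k + t).descFactorial k)
          * Nat.factorial (s - t) := by rw [e2]
    _ = (k + t).descFactorial k * (k + s).choose (k + t)
          * (Nat.factorial t * Nat.factorial (s - t)) := by ring

theorem myHockey (k N t : ℕ) :
    ∑ s ∈ Finset.Ico t N, (k + s).choose (k + t) = (k + N).choose (k + t + 1) := by
  rcases le_or_gt N t with h | h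
  · rw [Finset.Ico_eq_empty (show ¬ t < N by omega)]
    simp [Nat.choose_eq_zero_of_lt (show k + N < k + t + 1 by omega)]
  · have base := Nat.sum_Icc_choose (k + N - 1) (k + t)
    have h1 : Finset.Icc (k + t) (k + N - 1) = Finset.Ico (k + t) (k + N) := by
      rw [← Finset.Ico_add_one_right_eq_Icc]
      congr 1
      omega
    rw [h1, show k + N - 1 + 1 = k + N by omega] at base
    rw [← base, Finset.sum_Ico_eq_sum_range, Finset.sum_Ico_eq_sum_range,
      show k + N - (k + t) = N - t by omega]
    exact Finset.sum_congr rfl fun i _ => by rw [← Nat.add_assoc]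

/-- Lemma 3. Let `k ≥ 0`, `n ≥ 1`, let `p` be a prime, let `α ∈ ℤ` with
`α ≡ 1 (mod p)`, and let `ℓ = ν_p(n)`. Then the integer
`∑_{i=k}^{n-1} i^(k̲) · α^(i-k)` is congruent modulo `p^ℓ` to the rational
number `((n-1)^(k̲)/(k+1)) · n`: that is, either the two quantities are equal
or the difference has `p`-adic valuation at least `ℓ`. -/
theorem sum_descFactorial_mul_pow_modEq_descFactorial_div_mul
    (k n : ℕ) (hn : 1 ≤ n) (p : ℕ) (hp : Nat.Prime p)
    (α : ℤ) (hα : α ≡ 1 [ZMOD (p : ℤ)]) (ℓ : ℕ) (hℓ : ℓ = padicValNat p n) :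
    ((∑ i ∈ Finset.Ico k n, (i.descFactorial k : ℚ) * (α : ℚ) ^ (i - k)) -
        ((n - 1).descFactorial k : ℚ) / (k + 1) * n = 0) ∨
      (ℓ : ℤ) ≤ padicValRat p
        ((∑ i ∈ Finset.Ico k n, (i.descFactorial k : ℚ) * (α : ℚ) ^ (i - k)) -
          ((n - 1).descFactorial k : ℚ) / (k + 1) * n) := by
  haveI : Fact p.Prime := ⟨hp⟩
  rcases le_or_gt n k with hnk | hkn
  · left
    rw [Finset.Ico_eq_empty (show ¬ k < n by omega),
      Nat.descFactorial_eq_zero_iff_lt.mpr (show n - 1 < k by omega)]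
    simp
  · set N := n - k with hN
    have hNn : n = k + N := by omega
    have hN1 : 1 ≤ N := by omega
    set A : ℤ := α - 1 with hAdef
    have hpA : (p : ℤ) ∣ A := by
      have h1 : (p : ℤ) ∣ 1 - α := Int.ModEq.dvd hα
      have h2 : (p : ℤ) ∣ -(1 - α) := dvd_neg.mpr h1
      rw [hAdef]
      simpa using h2
    -- the integer sum identity
    have key : (∑ i ∈ Finset.Ico k n, (i.descFactorial k : ℤ) * α ^ (i - k))
        = ∑ t ∈ Finset.range N,
            (((k + t).descFactorial k * n.choose (k + t + 1) : ℕ) : ℤ) * A ^ t := by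
      rw [Finset.sum_Ico_eq_sum_range]
      calc ∑ s ∈ Finset.range (n - k), ((k + s).descFactorial k : ℤ) * α ^ (k + s - k)
          = ∑ s ∈ Finset.range N, ∑ t ∈ Finset.range (s + 1),
              (((k + s).descFactorial k * s.choose t : ℕ) : ℤ) * A ^ t := by
            rw [← hN]
            refine Finset.sum_congr rfl fun s _ => ?_
            rw [show k + s - k = s by omega, show α = A + 1 by rw [hAdef]; ring, add_pow,
              Finset.mul_sum]
            refine Finset.sum_congr rfl fun t _ => ?_
            push_cast
            ring
        _ = ∑ s ∈ Finset.Ico 0 N, ∑ t ∈ Finset.Ico 0 (s + 1),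
              (((k + s).descFactorial k * s.choose t : ℕ) : ℤ) * A ^ t := by
            simp only [Finset.range_eq_Ico]
        _ = ∑ t ∈ Finset.Ico 0 N, ∑ s ∈ Finset.Ico t N,
              (((k + s).descFactorial k * s.choose t : ℕ) : ℤ) * A ^ t :=
            (Finset.sum_Ico_Ico_comm 0 N fun t s =>
              (((k + s).descFactorial k * s.choose t : ℕ) : ℤ) * A ^ t).symm
        _ = ∑ t ∈ Finset.range N,
              (((k + t).descFactorial k * n.choose (k + t + 1) : ℕ) : ℤ) * A ^ t := by
            rw [Finset.range_eq_Ico]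
            refine Finset.sum_congr rfl fun t _ => ?_
            rw [← Finset.sum_mul, ← Nat.cast_sum]
            congr 2
            calc ∑ s ∈ Finset.Ico t N, (k + s).descFactorial k * s.choose t
                = ∑ s ∈ Finset.Ico t N, (k + t).descFactorial k * (k + s).choose (k + t) :=
                  Finset.sum_congr rfl fun s hs => myL2 k s t (Finset.mem_Ico.mp hs).1
              _ = (k + t).descFactorial k * ∑ s ∈ Finset.Ico t N, (k + s).choose (k + t) :=
                  (Finset.mul_sum _ _ _).symm
              _ = (k + t).descFactorial k * (k + N).choose (k + t + 1) := by rw [myHockey]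
              _ = (k + t).descFactorial k * n.choose (k + t + 1) := by rw [← hNn]
    have hsplit : (∑ t ∈ Finset.range N,
          (((k + t).descFactorial k * n.choose (k + t + 1) : ℕ) : ℤ) * A ^ t)
        = (((k + 0).descFactorial k * n.choose (k + 0 + 1) : ℕ) : ℤ) * A ^ 0
          + ∑ t ∈ Finset.Ico 1 N,
              (((k + t).descFactorial k * n.choose (k + t + 1) : ℕ) : ℤ) * A ^ t := by
      rw [Finset.range_eq_Ico, Finset.sum_eq_sum_Ico_succ_bot (by omega)]
    set D : ℤ := ∑ t ∈ Finset.Ico 1 N,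
        (((k + t).descFactorial k * n.choose (k + t + 1) : ℕ) : ℤ) * A ^ t with hD
    have hdvdD : (p : ℤ) ^ ℓ ∣ D := by
      refine Finset.dvd_sum fun t htm => ?_
      have h1 := myDvd p ‹Fact p.Prime› n k t ℓ (by omega) hℓ A hpA (Finset.mem_Ico.mp htm).1
      calc (p : ℤ) ^ ℓ ∣ ((k + t).descFactorial k : ℤ) * (n.choose (k + t + 1) : ℤ) * A ^ t := h1
        _ = (((k + t).descFactorial k * n.choose (k + t + 1) : ℕ) : ℤ) * A ^ t := by push_cast; ring
    -- rational side of the constant term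
    have hnat : (n - 1).descFactorial k * n
        = (k + 1) * (Nat.factorial k * n.choose (k + 1)) := by
      have h1 : n.descFactorial (k + 1) = n * (n - 1).descFactorial k := by
        have := Nat.succ_descFactorial_succ (n - 1) k
        rwa [Nat.sub_add_cancel hn] at this
      have h2 := Nat.descFactorial_eq_factorial_mul_choose n (k + 1)
      rw [Nat.factorial_succ] at h2
      calc (n - 1).descFactorial k * n = n.descFactorial (k + 1) := by rw [h1]; ring
        _ = (k + 1) * (Nat.factorial k * n.choose (k + 1)) := by rw [h2]; ring
    have hk1 : ((k : ℚ) + 1) ≠ 0 := by positivity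
    have hT : ((n - 1).descFactorial k : ℚ) / (k + 1) * n
        = ((Nat.factorial k * n.choose (k + 1) : ℕ) : ℚ) := by
      rw [div_mul_eq_mul_div, div_eq_iff hk1, mul_comm (((Nat.factorial k * n.choose (k + 1) : ℕ) : ℚ))]
      exact_mod_cast hnat
    have hgoal : (∑ i ∈ Finset.Ico k n, (i.descFactorial k : ℚ) * (α : ℚ) ^ (i - k)) -
          ((n - 1).descFactorial k : ℚ) / (k + 1) * n = ((D : ℤ) : ℚ) := by
      have hcast : (∑ i ∈ Finset.Ico k n, (i.descFactorial k : ℚ) * (α : ℚ) ^ (i - k))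
          = ((∑ i ∈ Finset.Ico k n, (i.descFactorial k : ℤ) * α ^ (i - k) : ℤ) : ℚ) := by
        push_cast
        rfl
      rw [hcast, key, hsplit, hT, hD]
      push_cast
      simp only [Nat.add_zero, Nat.descFactorial_self, pow_zero]
      ring
    rcases eq_or_ne D 0 with h0 | h0
    · left
      rw [hgoal, h0]
      norm_num
    · right
      rw [hgoal, padicValRat.of_int]
      have hle : ℓ ≤ padicValInt p D :=
        ((padicValInt_dvd_iff (p := p) ℓ D).mp hdvdD).resolve_left h0
      exact_mod_cast hle
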